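/- arXiv:2010.06669 — 2 statements merged into one kernel-verified Lean document; each statement's English description precedes it below -/
import Mathlib

section
/- Let R be a commutative ring and let a = (a_1,...,a_n) and b = (b_1,...,b_n) be row vectors over R with n ≥ 2. Define the Suslin matrix α_n(a,b) of size 2^{n-1} inductively by α_1(a,b) = (a_1) and α_n(a,b) = [[a_1·Id, α_{n-1}(a',b')],[−α_{n-1}(b',a')^t, b_1·Id]] where a' = (a_2,...,a_n), b' = (b_2,...,b_n). Then det(α_n(a,b)) = (a·b^t)^{2^{n-2}} for all n ≥ 2. -/
open Matrix

variable {R : Type*} [CommRing R]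

/-- A matrix is alternating if its transpose is its negative and its diagonal vanishes. -/
def IsAltMat {n : Type*} [Fintype n] [DecidableEq n] (M : Matrix n n R) : Prop :=
  Mᵀ = -M ∧ ∀ i, M i i = 0

/-- Block-diagonal (orthogonal) sum of two square matrices. -/
def bd {m n : ℕ} (A : Matrix (Fin m) (Fin m) R) (B : Matrix (Fin n) (Fin n) R) :
    Matrix (Fin (m + n)) (Fin (m + n)) R :=
  Matrix.reindex finSumFinEquiv finSumFinEquiv (Matrix.fromBlocks A 0 0 B)

/-- The standard symplectic matrix ψ₂ ⊥ ... ⊥ ψ₂. -/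
def psiMat (k : ℕ) : Matrix (Fin k) (Fin k) R :=
  Matrix.of fun i j =>
    if (i : ℕ) + 1 = (j : ℕ) ∧ Even (i : ℕ) then 1
    else if (j : ℕ) + 1 = (i : ℕ) ∧ Even (j : ℕ) then -1 else 0

/-- The matrix σ₂ ⊥ ... ⊥ σ₂ with σ₂ = [[0,1],[1,0]]. -/
def sigmaMat (k : ℕ) : Matrix (Fin k) (Fin k) R :=
  Matrix.of fun i j =>
    if ((i : ℕ) + 1 = (j : ℕ) ∧ Even (i : ℕ)) ∨ ((j : ℕ) + 1 = (i : ℕ) ∧ Even (j : ℕ)) then 1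
    else 0

/-- The elementary subgroup `E_N(R)`, realized as the submonoid of the matrix ring
generated by elementary (transvection) matrices. -/
def Esub (N : ℕ) : Submonoid (Matrix (Fin N) (Fin N) R) :=
  Submonoid.closure {M | ∃ (i j : Fin N) (c : R), i ≠ j ∧ M = Matrix.transvection i j c}

/-- The Pfaffian of a square matrix, by expansion along the first row
(it is the usual Pfaffian on alternating matrices of even size). -/
def pfaffian : (n : ℕ) → Matrix (Fin n) (Fin n) R → R
  | 0, _ => 1
  | 1, _ => 0
  | (n + 2), A =>
      ∑ j : Fin (n + 1),
        (-1) ^ (j : ℕ) * A 0 j.succ *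
          pfaffian n (A.submatrix (fun i => (j.succAbove i).succ)
            (fun i => (j.succAbove i).succ))

/-- Suslin matrices: `suslin n a b` is the Suslin matrix `α_{n+1}(a,b)` of size `2^n`. -/
def suslin : (n : ℕ) → (Fin (n + 1) → R) → (Fin (n + 1) → R) →
    Matrix (Fin (2 ^ n)) (Fin (2 ^ n)) R
  | 0, a, _ => Matrix.of fun _ _ => a 0
  | (n + 1), a, b =>
      Matrix.reindex (finSumFinEquiv.trans (finCongr (by ring)))
        (finSumFinEquiv.trans (finCongr (by ring)))
        (Matrix.fromBlocks (a 0 • (1 : Matrix (Fin (2 ^ n)) (Fin (2 ^ n)) R))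
          (suslin n (fun i => a i.succ) (fun i => b i.succ))
          (-(suslin n (fun i => b i.succ) (fun i => a i.succ))ᵀ)
          (b 0 • (1 : Matrix (Fin (2 ^ n)) (Fin (2 ^ n)) R)))

/-- Stabilized invertible alternating matrices: pairs of a rank and a matrix of that even rank. -/
abbrev Sig (R : Type*) [CommRing R] := Σ n : ℕ, Matrix (Fin (2 * n)) (Fin (2 * n)) R

/-- The equivalence relation defining `W'_E(R)`: `M ~ N` iff
`M ⊥ ψ_{2n+2s} = Eᵗ (N ⊥ ψ_{2m+2s}) E` for some `s ≥ 1` and elementary `E`. -/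
def altRel (x y : Sig R) : Prop :=
  ∃ s : ℕ, 1 ≤ s ∧ ∃ ε ∈ Esub (R := R) (2 * x.1 + 2 * y.1 + 2 * s),
    Matrix.reindex (finCongr (by omega)) (finCongr (by omega))
        (bd x.2 (psiMat (2 * y.1 + 2 * s))) =
      εᵀ * Matrix.reindex (finCongr (by omega)) (finCongr (by omega))
        (bd y.2 (psiMat (2 * x.1 + 2 * s))) * ε

/-- Orthogonal sum on stabilized matrices. -/
def oplus (x y : Sig R) : Sig R :=
  ⟨x.1 + y.1, Matrix.reindex (finCongr (by ring)) (finCongr (by ring)) (bd x.2 y.2)⟩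

lemma suslin_mul_key {R : Type*} [CommRing R] :
    ∀ (n : ℕ) (a b : Fin (n + 1) → R),
      suslin n a b * (suslin n b a)ᵀ = (∑ i, a i * b i) • 1 ∧
      (suslin n b a)ᵀ * suslin n a b = (∑ i, a i * b i) • 1 := by
  intro n
  induction n with
  | zero =>
    intro a b
    constructor <;>
    · ext i j
      fin_cases i; fin_cases j
      simp [suslin, Matrix.mul_apply, mul_comm]
  | succ n ih =>
    intro a b
    obtain ⟨h1, h2⟩ := ih (fun i => a i.succ) (fun i => b i.succ)
    have hsum : (∑ i, a i * b i)
        = a 0 * b 0 + ∑ i : Fin (n + 1), a i.succ * b i.succ := by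
      rw [Fin.sum_univ_succ]
    constructor <;>
    · simp only [suslin, reindex_apply, transpose_submatrix, submatrix_mul_equiv,
        fromBlocks_transpose, transpose_neg, transpose_transpose, transpose_smul,
        transpose_one, fromBlocks_multiply]
      rw [hsum]
      simp only [Matrix.smul_mul, Matrix.mul_smul, Matrix.one_mul, Matrix.mul_one,
        Matrix.neg_mul, Matrix.mul_neg, neg_neg, smul_smul, h1, h2, add_neg_cancel,
        neg_add_cancel, smul_neg]
      simp only [← add_smul, mul_comm (b 0) (a 0), add_comm (a 0 * b 0)]
      have hz : Matrix.fromBlocks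
          (((∑ i : Fin (n + 1), a i.succ * b i.succ) + a 0 * b 0) •
            (1 : Matrix (Fin (2 ^ n)) (Fin (2 ^ n)) R)) 0 0
          (((∑ i : Fin (n + 1), a i.succ * b i.succ) + a 0 * b 0) •
            (1 : Matrix (Fin (2 ^ n)) (Fin (2 ^ n)) R))
          = ((∑ i : Fin (n + 1), a i.succ * b i.succ) + a 0 * b 0) • 1 := by
        rw [show (1 : Matrix (Fin (2 ^ n) ⊕ Fin (2 ^ n)) (Fin (2 ^ n) ⊕ Fin (2 ^ n)) R)
          = Matrix.fromBlocks 1 0 0 1 from fromBlocks_one.symm, fromBlocks_smul, smul_zero]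
      rw [hz]
      simp [submatrix_smul, submatrix_one_equiv]
      rw [← Equiv.coe_trans, submatrix_one_equiv]

lemma suslin_det_aux {R : Type*} [CommRing R] (n : ℕ) (a b : Fin (n + 2) → R) :
    (suslin (n + 1) a b).det * (b 0) ^ (2 ^ n)
      = (∑ i, a i * b i) ^ (2 ^ n) * (b 0) ^ (2 ^ n) := by
  obtain ⟨h1, -⟩ := suslin_mul_key n (fun i => a i.succ) (fun i => b i.succ)
  set S := suslin n (fun i => a i.succ) (fun i => b i.succ) with hS
  set T := suslin n (fun i => b i.succ) (fun i => a i.succ) with hT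
  set M : Matrix (Fin (2 ^ n) ⊕ Fin (2 ^ n)) (Fin (2 ^ n) ⊕ Fin (2 ^ n)) R :=
    fromBlocks (a 0 • 1) S (-Tᵀ) (b 0 • 1) with hM
  set N : Matrix (Fin (2 ^ n) ⊕ Fin (2 ^ n)) (Fin (2 ^ n) ⊕ Fin (2 ^ n)) R :=
    fromBlocks (b 0 • 1) 0 Tᵀ 1 with hN
  have hdet1 : (suslin (n + 1) a b).det = M.det := by
    simp only [suslin, reindex_apply, det_submatrix_equiv_self, hM, hS, hT]
  have hNdet : N.det = (b 0) ^ (2 ^ n) := by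
    simp [hN, det_fromBlocks_zero₁₂, det_smul, Fintype.card_fin]
  have hMN : M * N = fromBlocks ((∑ i, a i * b i) • 1) S 0 (b 0 • 1) := by
    simp only [hM, hN, fromBlocks_multiply, Matrix.smul_mul, Matrix.mul_smul,
      Matrix.one_mul, Matrix.mul_one, Matrix.mul_zero, Matrix.zero_mul, zero_add, add_zero,
      h1, smul_smul, Matrix.neg_mul, smul_neg, neg_add_cancel, Fin.sum_univ_succ, add_smul,
      mul_comm (b 0) (a 0)]
  have hMNdet : (M * N).det = (∑ i, a i * b i) ^ (2 ^ n) * (b 0) ^ (2 ^ n) := by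
    rw [hMN, det_fromBlocks_zero₂₁]
    simp [det_smul, Fintype.card_fin]
  rw [hdet1, ← hNdet, ← det_mul, hMNdet, hNdet]

lemma suslin_map {R S : Type*} [CommRing R] [CommRing S] (f : R →+* S) :
    ∀ (n : ℕ) (a b : Fin (n + 1) → R),
      (suslin n a b).map f = suslin n (fun i => f (a i)) (fun i => f (b i)) := by
  intro n
  induction n with
  | zero => intro a b; ext i j; simp [suslin]
  | succ n ih =>
    intro a b
    have hone : ∀ c : R, (c • (1 : Matrix (Fin (2 ^ n)) (Fin (2 ^ n)) R)).map f
        = f c • 1 := by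
      intro c
      ext i j
      simp only [Matrix.map_apply, Matrix.smul_apply, Matrix.one_apply, smul_eq_mul,
        mul_ite, mul_one, mul_zero]
      split <;> simp
    have hneg : ∀ (k : ℕ) (A : Matrix (Fin k) (Fin k) R), (-Aᵀ).map f = -((A.map f)ᵀ) := by
      intro k A; ext i j; simp [Matrix.map_apply]
    simp only [suslin, reindex_apply, ← submatrix_map, fromBlocks_map, hone, hneg, ih]

/-- Suslin's determinant formula: `det (α_n(a,b)) = (a·bᵗ)^{2^{n-2}}` for `n ≥ 2`.
Here `suslin m a b = α_{m+1}(a,b)` and `m ≥ 1`, so the exponent is `2^{m-1}`. -/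
theorem suslin_det {R : Type*} [CommRing R] (m : ℕ) (hm : 1 ≤ m)
    (a b : Fin (m + 1) → R) :
    (suslin m a b).det = (∑ i, a i * b i) ^ 2 ^ (m - 1) := by
  obtain ⟨n, rfl⟩ : ∃ n, m = n + 1 := ⟨m - 1, (Nat.succ_pred_eq_of_pos hm).symm⟩
  simp only [Nat.add_sub_cancel]
  set P := MvPolynomial (Fin (n + 2) ⊕ Fin (n + 2)) ℤ
  set ag : Fin (n + 2) → P := fun i => MvPolynomial.X (Sum.inl i) with hag
  set bg : Fin (n + 2) → P := fun i => MvPolynomial.X (Sum.inr i) with hbg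
  have hgen : (suslin (n + 1) ag bg).det = (∑ i, ag i * bg i) ^ 2 ^ n := by
    have h := suslin_det_aux n ag bg
    have hb : (bg 0) ^ (2 ^ n) ≠ 0 :=
      pow_ne_zero _ (MvPolynomial.X_ne_zero _)
    exact mul_right_cancel₀ hb h
  set f : P →+* R := (MvPolynomial.aeval (Sum.elim a b)).toRingHom with hf
  have hfa : ∀ i, f (ag i) = a i := by
    intro i
    show (MvPolynomial.aeval (Sum.elim a b)) (MvPolynomial.X (Sum.inl i)) = a i
    rw [MvPolynomial.aeval_X]; rfl
  have hfb : ∀ i, f (bg i) = b i := by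
    intro i
    show (MvPolynomial.aeval (Sum.elim a b)) (MvPolynomial.X (Sum.inr i)) = b i
    rw [MvPolynomial.aeval_X]; rfl
  have hmap : (suslin (n + 1) ag bg).map f = suslin (n + 1) a b := by
    rw [suslin_map]
    congr 1 <;> ext i <;> simp [hfa, hfb]
  calc (suslin (n + 1) a b).det = ((suslin (n + 1) ag bg).map f).det := by rw [hmap]
    _ = f ((suslin (n + 1) ag bg).det) := (RingHom.map_det f _).symm
    _ = (∑ i, a i * b i) ^ 2 ^ n := by
        rw [hgen, map_pow, map_sum]
        simp only [_root_.map_mul, hfa, hfb]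
end

section
/- Let R be a commutative ring and let r, s be positive integers with rs even. Then the block permutation matrix [[0, Id_s],[Id_r, 0]] of rank r+s lies in the subgroup E_{r+s}(R) of GL_{r+s}(R) generated by elementary matrices. -/
open Matrix
open Fin.NatCast

variable {R : Type*} [CommRing R]

lemma transvection_mem_esub {N : ℕ} {i j : Fin N} (h : i ≠ j) (c : R) :
    Matrix.transvection i j c ∈ Esub (R := R) N :=
  Submonoid.subset_closure ⟨i, j, c, h, rfl⟩

lemma esub_inv {N : ℕ} {M : Matrix (Fin N) (Fin N) R} (h : M ∈ Esub (R := R) N) :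
    ∃ M' ∈ Esub (R := R) N, M * M' = 1 ∧ M' * M = 1 := by
  induction h using Submonoid.closure_induction with
  | mem x hx =>
      obtain ⟨i, j, c, hij, rfl⟩ := hx
      exact ⟨Matrix.transvection i j (-c), transvection_mem_esub hij _, by
        rw [Matrix.transvection_mul_transvection_same _ _ hij]; simp, by
        rw [Matrix.transvection_mul_transvection_same _ _ hij]; simp⟩
  | one => exact ⟨1, one_mem _, by simp, by simp⟩
  | mul x y hx hy ihx ihy =>
      obtain ⟨x', hx', hx1, hx2⟩ := ihx
      obtain ⟨y', hy', hy1, hy2⟩ := ihy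
      refine ⟨y' * x', mul_mem hy' hx', ?_, ?_⟩
      · rw [mul_assoc, ← mul_assoc y, hy1, one_mul, hx1]
      · rw [mul_assoc, ← mul_assoc x', hx2, one_mul, hy2]

def Qmat {N : ℕ} (g : Fin N → R) (σ : Equiv.Perm (Fin N)) : Matrix (Fin N) (Fin N) R :=
  Matrix.of fun a b => if b = σ a then g a else 0

lemma Qmat_mul {N : ℕ} (g h : Fin N → R) (σ τ : Equiv.Perm (Fin N)) :
    Qmat g σ * Qmat h τ = Qmat (fun a => g a * h (σ a)) (σ.trans τ) := by
  ext a b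
  simp only [Qmat, Matrix.mul_apply, Matrix.of_apply, Equiv.trans_apply]
  rw [Finset.sum_eq_single (σ a)]
  · simp [mul_ite]
    exact if_congr Iff.rfl rfl rfl
  · intro k _ hk
    simp [hk]
  · simp

lemma permMatrix_eq_Qmat {N : ℕ} (σ : Equiv.Perm (Fin N)) :
    σ.permMatrix R = Qmat (fun _ => (1 : R)) σ := by
  ext a b
  rw [Equiv.Perm.permMatrix, PEquiv.toMatrix_toPEquiv_eq]
  simp only [Qmat, Matrix.of_apply, Matrix.one_apply, Matrix.submatrix_apply, id]
  rcases eq_or_ne (σ a) b with rfl | hab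
  · simp
  · simp [hab, Ne.symm hab]

lemma transvection_entry {N : ℕ} (i j a b : Fin N) (c : R) :
    Matrix.transvection i j c a b =
      (if a = b then (1 : R) else 0) + (if a = i ∧ b = j then c else 0) := by
  simp only [Matrix.transvection, Matrix.add_apply, Matrix.one_apply, Matrix.single,
    Matrix.of_apply]
  by_cases h1 : a = i <;> by_cases h2 : b = j <;>
    simp [h1, h2, Ne.symm, eq_comm (a := i) (b := a), eq_comm (a := j) (b := b)]

lemma sswap {N : ℕ} (i j : Fin N) (hij : i ≠ j) :
    Matrix.transvection i j 1 * (Matrix.transvection j i (-1) * Matrix.transvection i j 1) =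
      Qmat (fun a => if a = j then (-1 : R) else 1) (Equiv.swap i j) := by
  ext a b
  rcases eq_or_ne a i with rfl | hai
  · rw [Matrix.transvection_mul_apply_same,
      Matrix.transvection_mul_apply_of_ne _ _ _ _ hij,
      Matrix.transvection_mul_apply_same]
    simp only [transvection_entry, Qmat, Matrix.of_apply, Equiv.swap_apply_left, true_and]
    rcases eq_or_ne b j with rfl | hbj
    · simp only [hij, Ne.symm hij, if_false, if_true, and_true, and_false]
      ring
    · rcases eq_or_ne a b with rfl | hab
      · simp only [hbj, Ne.symm hbj, hij, Ne.symm hij, if_false, if_true, and_false]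
        ring
      · simp only [hbj, Ne.symm hbj, hab, if_false, and_false]
        rcases eq_or_ne j b with rfl | hjb
        · simp
        · simp [hjb]
  rcases eq_or_ne a j with rfl | haj
  · rw [Matrix.transvection_mul_apply_of_ne _ _ _ _ (Ne.symm hij),
      Matrix.transvection_mul_apply_same]
    simp only [transvection_entry, Qmat, Matrix.of_apply, Equiv.swap_apply_right, true_and]
    rcases eq_or_ne b i with rfl | hbi
    · simp only [hij, Ne.symm hij, if_false, if_true, and_false, and_true]
      ring
    · rcases eq_or_ne a b with rfl | hab
      · simp only [hbi, Ne.symm hbi, Ne.symm hij, if_false, if_true, and_false, and_true]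
        ring
      · simp only [hbi, Ne.symm hbi, hab, Ne.symm hij, if_false, and_false]
        rcases eq_or_ne b a with rfl | hba
        · exact absurd rfl hab
        · simp [hba]
  · rw [Matrix.transvection_mul_apply_of_ne _ _ _ _ hai,
      Matrix.transvection_mul_apply_of_ne _ _ _ _ haj]
    simp only [transvection_entry, Qmat, Matrix.of_apply,
      Equiv.swap_apply_of_ne_of_ne hai haj, haj, if_false, false_and, and_false, add_zero]
    rcases eq_or_ne a b with rfl | hab
    · simp [hai]
    · simp [hab, Ne.symm hab, hai]

lemma permMatrix_mul {N : ℕ} (σ τ : Equiv.Perm (Fin N)) :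
    (σ * τ).permMatrix R = τ.permMatrix R * σ.permMatrix R := by
  show ((τ.trans σ).toPEquiv.toMatrix : Matrix _ _ R) = _
  rw [Equiv.toPEquiv_trans, PEquiv.toMatrix_trans]

lemma permMatrix_one {N : ℕ} : ((1 : Equiv.Perm (Fin N)).permMatrix R) = 1 := by
  show ((Equiv.refl (Fin N)).toPEquiv.toMatrix : Matrix _ _ R) = 1
  rw [Equiv.toPEquiv_refl, PEquiv.toMatrix_refl]

lemma threeCycle_matrix_mem {N : ℕ} (x y z : Fin N) (hxy : x ≠ y) (hxz : x ≠ z) (hyz : y ≠ z) :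
    (Equiv.swap x z * Equiv.swap x y).permMatrix R ∈ Esub (R := R) N := by
  have key : (Equiv.swap x z * Equiv.swap x y).permMatrix R =
      (Matrix.transvection x y 1 * (Matrix.transvection y x (-1) * Matrix.transvection x y 1)) *
        (Matrix.transvection z x 1 *
          (Matrix.transvection x z (-1) * Matrix.transvection z x 1)) := by
    rw [sswap x y hxy, sswap z x (Ne.symm hxz), Qmat_mul, permMatrix_eq_Qmat]
    have hperm : (Equiv.swap x y).trans (Equiv.swap z x) = Equiv.swap x z * Equiv.swap x y := by
      rw [Equiv.swap_comm z x]
      rfl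
    rw [hperm]
    ext a b
    simp only [Qmat, Matrix.of_apply]
    have h1 : (if a = y then (-1 : R) else 1) * (if (Equiv.swap x y) a = x then -1 else 1) = 1 := by
      rcases eq_or_ne a x with rfl | hax
      · rw [if_neg hxy, Equiv.swap_apply_left, if_neg (Ne.symm hxy), one_mul]
      rcases eq_or_ne a y with rfl | hay
      · rw [if_pos rfl, Equiv.swap_apply_right, if_pos rfl]
        ring
      · rw [if_neg hay, Equiv.swap_apply_of_ne_of_ne hax hay, if_neg hax, one_mul]
    rw [h1]
  rw [key]
  exact mul_mem
    (mul_mem (transvection_mem_esub hxy _)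
      (mul_mem (transvection_mem_esub (Ne.symm hxy) _) (transvection_mem_esub hxy _)))
    (mul_mem (transvection_mem_esub (Ne.symm hxz) _)
      (mul_mem (transvection_mem_esub hxz _) (transvection_mem_esub (Ne.symm hxz) _)))

lemma threeCycle_decomp {N : ℕ} {c : Equiv.Perm (Fin N)} (hc : c.IsThreeCycle) :
    ∃ x y z, x ≠ y ∧ x ≠ z ∧ y ≠ z ∧ c = Equiv.swap x z * Equiv.swap x y := by
  have hcard := hc.card_support
  have hne : c.support.Nonempty := by rw [← Finset.card_pos, hcard]; norm_num
  obtain ⟨x, hx⟩ := hne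
  have hcx : c x ≠ x := Equiv.Perm.mem_support.mp hx
  have hy : c x ∈ c.support := Equiv.Perm.apply_mem_support.mpr hx
  have hcy : c (c x) ≠ c x := Equiv.Perm.mem_support.mp hy
  have h3 : c ^ 3 = 1 := by
    rw [← hc.orderOf]; exact pow_orderOf_eq_one c
  have hcz : c (c (c x)) = x := by
    have h := congrArg (fun σ : Equiv.Perm (Fin N) => σ x) h3
    simpa [pow_succ, Equiv.Perm.mul_apply] using h
  have hzx : c (c x) ≠ x := by
    intro h
    exact hcx (hcz.symm.trans (congrArg c h)).symm
  refine ⟨x, c x, c (c x), Ne.symm hcx, Ne.symm hzx, Ne.symm hcy, ?_⟩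
  have hsupp : c.support = {x, c x, c (c x)} := by
    have hsub : ({x, c x, c (c x)} : Finset (Fin N)) ⊆ c.support := by
      intro a ha
      simp only [Finset.mem_insert, Finset.mem_singleton] at ha
      rcases ha with rfl | rfl | rfl
      · exact hx
      · exact hy
      · exact Equiv.Perm.apply_mem_support.mpr hy
    have hcard3 : ({x, c x, c (c x)} : Finset (Fin N)).card = 3 := by
      rw [Finset.card_insert_of_notMem (by simp [Ne.symm hcx, Ne.symm hzx]),
        Finset.card_insert_of_notMem (by simp [Ne.symm hcy]), Finset.card_singleton]
    exact (Finset.eq_of_subset_of_card_le hsub (by rw [hcard, hcard3])).symm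
  apply Equiv.ext
  intro a
  rw [Equiv.Perm.mul_apply]
  rcases eq_or_ne a x with rfl | hax
  · rw [Equiv.swap_apply_left]
    exact (Equiv.swap_apply_of_ne_of_ne hcx (Ne.symm hcy)).symm
  rcases eq_or_ne a (c x) with rfl | hay
  · rw [Equiv.swap_apply_right, Equiv.swap_apply_left]
  rcases eq_or_ne a (c (c x)) with rfl | haz
  · rw [Equiv.swap_apply_of_ne_of_ne hzx hcy, Equiv.swap_apply_right, hcz]
  · have hmem : a ∉ c.support := by
      rw [hsupp]
      simp [hax, hay, haz]
    rw [Equiv.swap_apply_of_ne_of_ne hax hay, Equiv.swap_apply_of_ne_of_ne hax haz]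
    exact Equiv.Perm.notMem_support.mp hmem

lemma perm_matrix_mem_esub {N : ℕ} (σ : Equiv.Perm (Fin N)) (hσ : Equiv.Perm.sign σ = 1) :
    σ.permMatrix R ∈ Esub (R := R) N := by
  have hσ' : σ ∈ alternatingGroup (Fin N) := Equiv.Perm.mem_alternatingGroup.mpr hσ
  rw [← Equiv.Perm.closure_three_cycles_eq_alternating] at hσ'
  clear hσ
  induction hσ' using Subgroup.closure_induction with
  | mem c hcmem =>
      obtain ⟨x, y, z, hxy, hxz, hyz, rfl⟩ := threeCycle_decomp hcmem
      exact threeCycle_matrix_mem x y z hxy hxz hyz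
  | one => rw [_root_.permMatrix_one]; exact one_mem _
  | mul a b _ _ iha ihb => rw [_root_.permMatrix_mul]; exact mul_mem ihb iha
  | inv a _ iha =>
      obtain ⟨M', hM', h1, h2⟩ := esub_inv iha
      have : (a⁻¹).permMatrix R = M' := by
        have hinv : a.permMatrix R * (a⁻¹).permMatrix R = 1 := by
          rw [← _root_.permMatrix_mul, inv_mul_cancel, _root_.permMatrix_one]
        calc (a⁻¹).permMatrix R = 1 * (a⁻¹).permMatrix R := by rw [one_mul]
          _ = M' * (a.permMatrix R * (a⁻¹).permMatrix R) := by rw [← mul_assoc, h2]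
          _ = M' := by rw [hinv, mul_one]
      rw [this]; exact hM'

lemma finRotate_apply_general {n : ℕ} [NeZero n] (a : Fin n) : finRotate n a = a + 1 := by
  cases n with
  | zero => exact a.elim0
  | succ m => exact finRotate_succ_apply a

lemma rot_pow {n : ℕ} [NeZero n] (k : ℕ) (a : Fin n) :
    (finRotate n ^ k) a = a + (k : Fin n) := by
  induction k generalizing a with
  | zero => simp
  | succ k ih =>
      rw [pow_succ, Equiv.Perm.mul_apply, finRotate_apply_general, ih, Nat.cast_succ,
        add_assoc, add_comm (1 : Fin n)]

/-- The block permutation matrix `[[0, Id_s],[Id_r, 0]]` of rank `r+s` lies in `E_{r+s}(R)`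
whenever `rs` is even. -/
theorem blockSwap_mem_elementary {R : Type*} [CommRing R] (r s : ℕ)
    (hr : 0 < r) (hs : 0 < s) (h : Even (r * s)) :
    Matrix.reindex (finSumFinEquiv.trans (finCongr (Nat.add_comm s r))) finSumFinEquiv
        (Matrix.fromBlocks (0 : Matrix (Fin s) (Fin r) R) (1 : Matrix (Fin s) (Fin s) R)
          (1 : Matrix (Fin r) (Fin r) R) (0 : Matrix (Fin r) (Fin s) R)) ∈
      Esub (R := R) (r + s) := by
  haveI : NeZero (r + s) := ⟨by omega⟩
  have hsign : Equiv.Perm.sign (finRotate (r + s) ^ r) = 1 := by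
    obtain ⟨m, hm⟩ : ∃ m, r + s = m + 1 := ⟨r + s - 1, by omega⟩
    have heven : Even (m * r) := by
      have h2 : Even ((r - 1) * r) := by
        have h' := Nat.even_mul_succ_self (r - 1)
        rwa [Nat.sub_add_cancel hr] at h'
      have h3 : Even (s * r) := (Nat.mul_comm r s) ▸ h
      have hm' : m = (r - 1) + s := by omega
      rw [hm', Nat.add_mul]
      exact h2.add h3
    rw [hm, map_pow, sign_finRotate, ← pow_mul]
    exact Even.neg_one_pow heven
  have hmem := perm_matrix_mem_esub (R := R) (finRotate (r + s) ^ r) hsign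
  have hrot : ∀ x : Fin (r + s), ((finRotate (r + s) ^ r) x).val = (x.val + r) % (r + s) := by
    intro x
    rw [rot_pow, Fin.add_def, Fin.val_natCast]
    exact Nat.add_mod_mod _ _ _
  have e1l : ∀ i : Fin s,
      ((finSumFinEquiv.trans (finCongr (Nat.add_comm s r))) (Sum.inl i)).val = i.val := by
    intro i
    simp [finCongr_apply]
  have e1r : ∀ i : Fin r,
      ((finSumFinEquiv.trans (finCongr (Nat.add_comm s r))) (Sum.inr i)).val = s + i.val := by
    intro i
    simp [finCongr_apply]
    omega
  have e2l : ∀ j : Fin r, (finSumFinEquiv (Sum.inl j) : Fin (r + s)).val = j.val := by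
    intro j; simp
  have e2r : ∀ j : Fin s, (finSumFinEquiv (Sum.inr j) : Fin (r + s)).val = r + j.val := by
    intro j; simp
  have hEq : Matrix.reindex (finSumFinEquiv.trans (finCongr (Nat.add_comm s r))) finSumFinEquiv
      (Matrix.fromBlocks (0 : Matrix (Fin s) (Fin r) R) (1 : Matrix (Fin s) (Fin s) R)
        (1 : Matrix (Fin r) (Fin r) R) (0 : Matrix (Fin r) (Fin s) R)) =
      (finRotate (r + s) ^ r).permMatrix R := by
    rw [permMatrix_eq_Qmat]
    ext a b
    obtain ⟨p, rfl⟩ := (finSumFinEquiv.trans (finCongr (Nat.add_comm s r))).surjective a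
    obtain ⟨q, rfl⟩ := finSumFinEquiv.surjective b
    rw [Matrix.reindex_apply, Matrix.submatrix_apply, Equiv.symm_apply_apply,
      Equiv.symm_apply_apply]
    rcases p with i | i <;> rcases q with j | j <;>
      simp only [Matrix.fromBlocks_apply₁₁, Matrix.fromBlocks_apply₁₂,
        Matrix.fromBlocks_apply₂₁, Matrix.fromBlocks_apply₂₂, Qmat, Matrix.of_apply,
        Matrix.one_apply, Matrix.zero_apply] <;>
      [skip; skip; skip; skip]
    · -- i : Fin s, j : Fin r : 0 = if ... then 1 else 0
      rw [if_neg]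
      intro hq
      have hv := congrArg Fin.val hq
      rw [hrot, e1l, e2l, Nat.mod_eq_of_lt (by omega : i.val + r < r + s)] at hv
      have hj := j.isLt
      omega
    · -- i : Fin s, j : Fin s : one_apply i j = ...
      have hcond : (finSumFinEquiv (Sum.inr j) : Fin (r + s)) =
          (finRotate (r + s) ^ r) ((finSumFinEquiv.trans (finCongr (Nat.add_comm s r)))
            (Sum.inl i)) ↔ i = j := by
        rw [Fin.ext_iff, Fin.ext_iff (a := i), hrot, e1l, e2r,
          Nat.mod_eq_of_lt (by omega : i.val + r < r + s)]
        omega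
      by_cases hij : i = j
      · rw [if_pos hij, if_pos (hcond.mpr hij)]
      · rw [if_neg hij, if_neg (fun hc => hij (hcond.mp hc))]
    · -- i : Fin r, j : Fin r
      have hmod : (s + i.val + r) % (r + s) = i.val := by
        rw [show s + i.val + r = (r + s) + i.val by omega, Nat.add_mod_left,
          Nat.mod_eq_of_lt (by omega : i.val < r + s)]
      have hcond : (finSumFinEquiv (Sum.inl j) : Fin (r + s)) =
          (finRotate (r + s) ^ r) ((finSumFinEquiv.trans (finCongr (Nat.add_comm s r)))
            (Sum.inr i)) ↔ i = j := by
        rw [Fin.ext_iff, Fin.ext_iff (a := i), hrot, e1r, e2l, hmod]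
        omega
      by_cases hij : i = j
      · rw [if_pos hij, if_pos (hcond.mpr hij)]
      · rw [if_neg hij, if_neg (fun hc => hij (hcond.mp hc))]
    · -- i : Fin r, j : Fin s
      rw [if_neg]
      intro hq
      have hv := congrArg Fin.val hq
      have hmod : (s + i.val + r) % (r + s) = i.val := by
        rw [show s + i.val + r = (r + s) + i.val by omega, Nat.add_mod_left,
          Nat.mod_eq_of_lt (by omega : i.val < r + s)]
      rw [hrot, e1r, e2r, hmod] at hv
      have hi := i.isLt
      omega
  rw [hEq]
  exact hmem
end
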